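/- Let α, β be real numbers with min(α,β) ≥ 4, and let c₁, c₂ > 0 satisfy c₁ = α·A(c₁,c₂) and c₂ = β·A(c₁,c₂). Then min(c₁,c₂) ≥ 13/5. -/

import Mathlib

open Real Set MeasureTheory intervalIntegral

lemma exp_sub_one_pos' {x : ℝ} (hx : 0 < x) : 0 < Real.exp x - 1 := by
  have h := Real.exp_lt_exp.2 hx
  rw [Real.exp_zero] at h
  linarith

lemma aux_h1 {x : ℝ} (hx : 0 ≤ x) : 0 ≤ x * Real.exp x - Real.exp x + 1 := by
  have hmono : MonotoneOn (fun x : ℝ => x * Real.exp x - Real.exp x + 1) (Ici 0) := by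
    apply monotoneOn_of_deriv_nonneg (convex_Ici 0)
    · fun_prop
    · intro y hy
      exact ((((hasDerivAt_id y).mul (Real.hasDerivAt_exp y)).sub
        (Real.hasDerivAt_exp y)).add_const 1).differentiableAt.differentiableWithinAt
    · intro y hy
      rw [interior_Ici] at hy
      have h : HasDerivAt (fun x : ℝ => x * Real.exp x - Real.exp x + 1)
          (1 * Real.exp y + y * Real.exp y - Real.exp y) y := by
        simpa using ((((hasDerivAt_id y).mul (Real.hasDerivAt_exp y)).sub
          (Real.hasDerivAt_exp y)).add_const 1)
      rw [h.deriv]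
      have : (0:ℝ) < y := hy
      nlinarith [Real.exp_pos y]
  have := hmono (self_mem_Ici) hx hx
  simpa using this

lemma aux_h {x : ℝ} (hx : 0 ≤ x) : 0 ≤ x * Real.exp x - 2 * Real.exp x + x + 2 := by
  have hmono : MonotoneOn (fun x : ℝ => x * Real.exp x - 2 * Real.exp x + x + 2) (Ici 0) := by
    apply monotoneOn_of_deriv_nonneg (convex_Ici 0)
    · fun_prop
    · intro y hy
      exact (((((hasDerivAt_id y).mul (Real.hasDerivAt_exp y)).sub
        ((Real.hasDerivAt_exp y).const_mul 2)).add (hasDerivAt_id y)).add_const 2).differentiableAt.differentiableWithinAt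
    · intro y hy
      rw [interior_Ici] at hy
      have h : HasDerivAt (fun x : ℝ => x * Real.exp x - 2 * Real.exp x + x + 2)
          (1 * Real.exp y + y * Real.exp y - 2 * Real.exp y + 1) y := by
        simpa using (((((hasDerivAt_id y).mul (Real.hasDerivAt_exp y)).sub
          ((Real.hasDerivAt_exp y).const_mul 2)).add (hasDerivAt_id y)).add_const 2)
      rw [h.deriv]
      have := aux_h1 (le_of_lt (show (0:ℝ) < y from hy))
      linarith
  have := hmono (self_mem_Ici) hx hx
  simpa using this

lemma f_anti {x y : ℝ} (hx : 0 < x) (hxy : x ≤ y) :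
    y / (Real.exp y - 1) ≤ x / (Real.exp x - 1) := by
  have hy : 0 < y := lt_of_lt_of_le hx hxy
  rw [div_le_div_iff₀ (exp_sub_one_pos' hy) (exp_sub_one_pos' hx)]
  have hp : 1 ≤ y / x := (one_le_div hx).2 hxy
  have hs : (-1:ℝ) ≤ Real.exp x - 1 := by nlinarith [Real.exp_pos x]
  have hb := one_add_mul_self_le_rpow_one_add hs hp
  rw [show (1:ℝ) + (Real.exp x - 1) = Real.exp x by ring, ← Real.exp_mul] at hb
  rw [mul_div_cancel₀ _ (ne_of_gt hx)] at hb
  have : y / x * (Real.exp x - 1) ≤ Real.exp y - 1 := by linarith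
  calc y * (Real.exp x - 1) = (y / x * (Real.exp x - 1)) * x := by field_simp
    _ ≤ (Real.exp y - 1) * x := by
        apply mul_le_mul_of_nonneg_right this (le_of_lt hx)
    _ = x * (Real.exp y - 1) := by ring

noncomputable def fder (x : ℝ) : ℝ :=
  (Real.exp x - 1 - x * Real.exp x) / (Real.exp x - 1) ^ 2

lemma f_hasDeriv {x : ℝ} (hx : 0 < x) :
    HasDerivAt (fun y : ℝ => y / (Real.exp y - 1)) (fder x) x := by
  have h := (hasDerivAt_id x).div ((Real.hasDerivAt_exp x).sub_const 1)
    (ne_of_gt (exp_sub_one_pos' hx))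
  simpa [fder, id, Pi.div_def] using h.congr_deriv (by simp only [fder, id]; ring)

lemma fder_hasDeriv {x : ℝ} (hx : 0 < x) :
    HasDerivAt fder
      (((Real.exp x - (1 * Real.exp x + x * Real.exp x)) * (Real.exp x - 1) ^ 2 -
        (Real.exp x - 1 - x * Real.exp x) * (↑2 * (Real.exp x - 1) ^ 1 * Real.exp x)) /
        ((Real.exp x - 1) ^ 2) ^ 2) x := by
  have hN : HasDerivAt (fun y : ℝ => Real.exp y - 1 - y * Real.exp y)
      (Real.exp x - (1 * Real.exp x + x * Real.exp x)) x := by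
    simpa [Pi.sub_def, Pi.mul_def, id] using ((Real.hasDerivAt_exp x).sub_const 1).sub
      ((hasDerivAt_id x).mul (Real.hasDerivAt_exp x))
  have hD : HasDerivAt (fun y : ℝ => (Real.exp y - 1) ^ 2)
      (↑2 * (Real.exp x - 1) ^ 1 * Real.exp x) x :=
    ((Real.hasDerivAt_exp x).sub_const 1).pow 2
  exact hN.div hD (pow_ne_zero 2 (ne_of_gt (exp_sub_one_pos' hx)))

lemma fder2_nonneg {x : ℝ} (hx : 0 < x) :
    0 ≤ ((Real.exp x - (1 * Real.exp x + x * Real.exp x)) * (Real.exp x - 1) ^ 2 -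
        (Real.exp x - 1 - x * Real.exp x) * (↑2 * (Real.exp x - 1) ^ 1 * Real.exp x)) /
        ((Real.exp x - 1) ^ 2) ^ 2 := by
  apply div_nonneg _ (by positivity)
  have hd := exp_sub_one_pos' hx
  have hu := Real.exp_pos x
  have hh := aux_h hx.le
  nlinarith [mul_nonneg (mul_nonneg hd.le hu.le) hh]

lemma f_convex : ConvexOn ℝ (Ioi 0) (fun y : ℝ => y / (Real.exp y - 1)) := by
  apply convexOn_of_deriv2_nonneg (convex_Ioi 0)
  · intro x hx
    exact (f_hasDeriv hx).continuousAt.continuousWithinAt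
  · rw [interior_Ioi]
    intro x hx
    exact (f_hasDeriv hx).differentiableAt.differentiableWithinAt
  · rw [interior_Ioi]
    intro x hx
    have hev : deriv (fun y : ℝ => y / (Real.exp y - 1)) =ᶠ[nhds x] fder :=
      Filter.eventually_of_mem (Ioi_mem_nhds hx) (fun y hy => (f_hasDeriv hy).deriv)
    exact ((fder_hasDeriv hx).differentiableAt.congr_of_eventuallyEq hev).differentiableWithinAt
  · rw [interior_Ioi]
    intro x hx
    have hev : deriv (fun y : ℝ => y / (Real.exp y - 1)) =ᶠ[nhds x] fder :=
      Filter.eventually_of_mem (Ioi_mem_nhds hx) (fun y hy => (f_hasDeriv hy).deriv)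
    have h2 : deriv^[2] (fun y : ℝ => y / (Real.exp y - 1)) x
        = deriv (deriv (fun y : ℝ => y / (Real.exp y - 1))) x := rfl
    rw [h2, hev.deriv_eq, (fder_hasDeriv hx).deriv]
    exact fder2_nonneg hx

lemma gap_eq {m : ℝ} (hm : 0 < m) :
    m / (Real.exp m - 1) - 2 * m / (Real.exp (2 * m) - 1) = m / (Real.exp m + 1) := by
  have h2 : Real.exp (2 * m) = Real.exp m ^ 2 := by
    rw [two_mul, Real.exp_add, sq]
  have hd := exp_sub_one_pos' hm
  have hp : (0:ℝ) < Real.exp m + 1 := by positivity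
  rw [h2, show Real.exp m ^ 2 - 1 = (Real.exp m - 1) * (Real.exp m + 1) by ring]
  field_simp
  ring

lemma key_pointwise {x m : ℝ} (hx : 0 < x) (hxm : x ≤ m) :
    m / (Real.exp m + 1) ≤
      x / (Real.exp x - 1) - (x + m) / (Real.exp (x + m) - 1) := by
  have hm : 0 < m := lt_of_lt_of_le hx hxm
  set f : ℝ → ℝ := fun y => y / (Real.exp y - 1) with hf
  have hgap : f m - f (2 * m) = m / (Real.exp m + 1) := by
    simpa [hf] using gap_eq hm
  have hfour : f m + f (x + m) ≤ f x + f (2 * m) := by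
    rcases eq_or_lt_of_le hxm with rfl | hlt
    · rw [show x + x = 2 * x by ring]
    · have hden : 0 < 2 * m - x := by linarith
      set la : ℝ := (m - x) / (2 * m - x) with hla
      set lb : ℝ := m / (2 * m - x) with hlb
      have hla0 : 0 ≤ la := div_nonneg (by linarith) hden.le
      have hlb0 : 0 ≤ lb := by positivity
      have hsum : la + lb = 1 := by rw [hla, hlb, ← add_div, div_eq_iff hden.ne']; ring
      have hxmem : x ∈ Ioi (0:ℝ) := hx
      have h2mem : (2*m) ∈ Ioi (0:ℝ) := by simp; linarith
      have h1 := f_convex.2 hxmem h2mem hla0 hlb0 hsum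
      have h2 := f_convex.2 hxmem h2mem hlb0 hla0 (by linarith)
      have e1 : la * x + lb * (2 * m) = x + m := by
        rw [hla, hlb, div_mul_eq_mul_div, div_mul_eq_mul_div, ← add_div, div_eq_iff hden.ne']; ring
      have e2 : lb * x + la * (2 * m) = m := by
        rw [hla, hlb, div_mul_eq_mul_div, div_mul_eq_mul_div, ← add_div, div_eq_iff hden.ne']; ring
      simp only [smul_eq_mul] at h1 h2
      rw [e1] at h1
      rw [e2] at h2
      have := add_le_add h1 h2
      calc f m + f (x + m) ≤ (la + lb) * f x + (la + lb) * f (2*m) := by linarith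
        _ = f x + f (2*m) := by rw [hsum]; ring
  linarith

lemma f_intInt {t : ℝ} (ht : 0 ≤ t) :
    IntervalIntegrable (fun x : ℝ => x / (Real.exp x - 1)) volume 0 t := by
  rw [intervalIntegrable_iff, uIoc_of_le ht]
  apply Measure.integrableOn_of_bounded (M := 1) measure_Ioc_lt_top.ne
  · exact (measurable_id.div ((Real.measurable_exp).sub measurable_const)).aestronglyMeasurable
  · refine (ae_restrict_iff' measurableSet_Ioc).2 (Filter.Eventually.of_forall ?_)
    intro x hx
    have hx0 : 0 < x := hx.1
    have h1 : 0 ≤ x / (Real.exp x - 1) :=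
      div_nonneg hx0.le (exp_sub_one_pos' hx0).le
    have h2 : x / (Real.exp x - 1) ≤ 1 := by
      rw [div_le_one (exp_sub_one_pos' hx0)]
      have := Real.add_one_le_exp x
      linarith
    rw [Real.norm_eq_abs, abs_le]
    constructor <;> linarith

lemma S_lower {c₁ c₂ : ℝ} (hc₁ : 0 < c₁) (hc₂ : 0 < c₂) :
    (min c₁ c₂) * (min c₁ c₂ / (Real.exp (min c₁ c₂) + 1)) ≤
      (∫ x in (0:ℝ)..c₁, x / (Real.exp x - 1)) -
        ∫ x in c₂..(c₁ + c₂), x / (Real.exp x - 1) := by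
  set f : ℝ → ℝ := fun x => x / (Real.exp x - 1) with hf
  set m : ℝ := min c₁ c₂ with hmdef
  have hm : 0 < m := lt_min hc₁ hc₂
  have hmc₁ : m ≤ c₁ := min_le_left _ _
  have hmc₂ : m ≤ c₂ := min_le_right _ _
  have hshift : (∫ x in c₂..(c₁ + c₂), f x) = ∫ x in (0:ℝ)..c₁, f (x + c₂) := by
    rw [intervalIntegral.integral_comp_add_right f c₂, zero_add]
  have If1 : IntervalIntegrable f volume 0 m := f_intInt hm.le
  have If2 : IntervalIntegrable f volume m c₁ := by
    apply ContinuousOn.intervalIntegrable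
    apply ContinuousOn.div (by fun_prop) (by fun_prop)
    intro x hx
    rw [uIcc_of_le hmc₁] at hx
    exact ne_of_gt (exp_sub_one_pos' (lt_of_lt_of_le hm hx.1))
  have Ig1 : IntervalIntegrable (fun x => f (x + c₂)) volume 0 m := by
    apply ContinuousOn.intervalIntegrable
    simp only [hf]
    apply ContinuousOn.div (by fun_prop) (by fun_prop)
    intro x hx
    rw [uIcc_of_le hm.le] at hx
    have : (0:ℝ) < x + c₂ := by linarith [hx.1]
    exact ne_of_gt (exp_sub_one_pos' this)
  have Ig2 : IntervalIntegrable (fun x => f (x + c₂)) volume m c₁ := by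
    apply ContinuousOn.intervalIntegrable
    simp only [hf]
    apply ContinuousOn.div (by fun_prop) (by fun_prop)
    intro x hx
    rw [uIcc_of_le hmc₁] at hx
    have : (0:ℝ) < x + c₂ := by linarith [hx.1]
    exact ne_of_gt (exp_sub_one_pos' this)
  have hsf : ∫ x in (0:ℝ)..c₁, f x = (∫ x in (0:ℝ)..m, f x) + ∫ x in m..c₁, f x :=
    (integral_add_adjacent_intervals If1 If2).symm
  have hsg : ∫ x in (0:ℝ)..c₁, f (x + c₂)
      = (∫ x in (0:ℝ)..m, f (x + c₂)) + ∫ x in m..c₁, f (x + c₂) :=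
    (integral_add_adjacent_intervals Ig1 Ig2).symm
  have hmono2 : (∫ x in m..c₁, f (x + c₂)) ≤ ∫ x in m..c₁, f x := by
    apply integral_mono_on hmc₁ Ig2 If2
    intro x hx
    have hx0 : 0 < x := lt_of_lt_of_le hm hx.1
    exact f_anti hx0 (by linarith)
  have hsub : (∫ x in (0:ℝ)..m, f x) - (∫ x in (0:ℝ)..m, f (x + c₂))
      = ∫ x in (0:ℝ)..m, (f x - f (x + c₂)) := (integral_sub If1 Ig1).symm
  have hptwise : (fun _ : ℝ => m / (Real.exp m + 1)) ≤ᶠ[ae (volume.restrict (Icc (0:ℝ) m))]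
      fun x => f x - f (x + c₂) := by
    have h0 : ∀ᵐ x ∂(volume.restrict (Icc (0:ℝ) m)), x ≠ 0 := by
      apply ae_restrict_of_ae
      rw [MeasureTheory.ae_iff]
      simpa using measure_singleton (0:ℝ)
    have hmem : ∀ᵐ x ∂(volume.restrict (Icc (0:ℝ) m)), x ∈ Icc (0:ℝ) m :=
      ae_restrict_mem measurableSet_Icc
    filter_upwards [h0, hmem] with x hx0 hxm
    have hxpos : 0 < x := lt_of_le_of_ne hxm.1 (Ne.symm hx0)
    have h1 := key_pointwise hxpos hxm.2
    have h2 : f (x + c₂) ≤ f (x + m) := f_anti (by linarith) (by linarith)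
    simp only [hf] at h1 h2 ⊢
    linarith
  have hlow : m * (m / (Real.exp m + 1)) ≤ ∫ x in (0:ℝ)..m, (f x - f (x + c₂)) := by
    have hc : (∫ _ in (0:ℝ)..m, (m / (Real.exp m + 1))) = m * (m / (Real.exp m + 1)) := by
      rw [intervalIntegral.integral_const, smul_eq_mul, sub_zero]
    rw [← hc]
    exact integral_mono_ae_restrict hm.le intervalIntegrable_const (If1.sub Ig1) hptwise
  rw [hshift, hsf, hsg]
  linarith [hsub, hlow, hmono2]

/-- `A(c₁,c₂) = sqrt(∫_0^{c₁} x/(eˣ−1) dx − ∫_{c₂}^{c₁+c₂} x/(eˣ−1) dx)`. -/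
noncomputable def A (c₁ c₂ : ℝ) : ℝ :=
  Real.sqrt ((∫ x in (0 : ℝ)..c₁, x / (Real.exp x - 1)) -
    ∫ x in c₂..(c₁ + c₂), x / (Real.exp x - 1))

theorem min_c_ge (α β c₁ c₂ : ℝ) (hαβ : 4 ≤ min α β) (hc₁ : 0 < c₁) (hc₂ : 0 < c₂)
    (h₁ : c₁ = α * A c₁ c₂) (h₂ : c₂ = β * A c₁ c₂) :
    13 / 5 ≤ min c₁ c₂ := by
  set m : ℝ := min c₁ c₂ with hmdef
  have hm : 0 < m := lt_min hc₁ hc₂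
  set S : ℝ := (∫ x in (0:ℝ)..c₁, x / (Real.exp x - 1)) -
      ∫ x in c₂..(c₁ + c₂), x / (Real.exp x - 1) with hSdef
  have hSlow : m * (m / (Real.exp m + 1)) ≤ S := S_lower hc₁ hc₂
  have hS0 : 0 ≤ S := le_trans (by positivity) hSlow
  have hA : A c₁ c₂ = Real.sqrt S := rfl
  have ha0 : 0 ≤ A c₁ c₂ := Real.sqrt_nonneg _
  have ha2 : A c₁ c₂ ^ 2 = S := by rw [hA]; exact Real.sq_sqrt hS0
  have hα : 4 ≤ α := le_trans hαβ (min_le_left _ _)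
  have hβ : 4 ≤ β := le_trans hαβ (min_le_right _ _)
  have hma : 4 * A c₁ c₂ ≤ m := by
    apply le_min
    · have := mul_le_mul_of_nonneg_right hα ha0; linarith
    · have := mul_le_mul_of_nonneg_right hβ ha0; linarith
  have ha2' : A c₁ c₂ ^ 2 ≤ (m / 4) ^ 2 := by
    apply pow_le_pow_left₀ ha0 (by linarith)
  have hcmp : m * (m / (Real.exp m + 1)) ≤ m ^ 2 / 16 := by
    calc m * (m / (Real.exp m + 1)) ≤ S := hSlow
      _ = A c₁ c₂ ^ 2 := ha2.symm
      _ ≤ (m / 4) ^ 2 := ha2'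
      _ = m ^ 2 / 16 := by ring
  have hep : (0:ℝ) < Real.exp m + 1 := by positivity
  have hkey : 15 ≤ Real.exp m := by
    have h1 : m * (m / (Real.exp m + 1)) = m ^ 2 / (Real.exp m + 1) := by
      field_simp
    rw [h1, div_le_div_iff₀ hep (by norm_num : (0:ℝ) < 16)] at hcmp
    have hm2 : 0 < m ^ 2 := by positivity
    nlinarith
  have hexp : Real.exp (13 / 5) < 15 := by
    have h5 : Real.exp (13 / 5) ^ (5:ℕ) = Real.exp 1 ^ (13:ℕ) := by
      rw [← Real.exp_nat_mul, ← Real.exp_nat_mul]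
      norm_num
    have h13 : Real.exp 1 ^ (13:ℕ) < 2.7182818286 ^ (13:ℕ) :=
      pow_lt_pow_left₀ Real.exp_one_lt_d9 (Real.exp_pos 1).le (by norm_num)
    have : Real.exp (13 / 5) ^ (5:ℕ) < 15 ^ (5:ℕ) := by
      rw [h5]
      calc Real.exp 1 ^ (13:ℕ) < 2.7182818286 ^ (13:ℕ) := h13
        _ < 15 ^ (5:ℕ) := by norm_num
    exact lt_of_pow_lt_pow_left₀ 5 (by norm_num) this
  have : Real.exp (13 / 5) < Real.exp m := lt_of_lt_of_le hexp hkey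
  have := Real.exp_lt_exp.1 this
  linarith
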